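/- Let α > 0 and let I ⊆ ℝ be an open interval. If F is an indefinite MC^α integral of f on I and G is an indefinite MC^α integral of g on I, and a, b ∈ ℝ, then aF + bG is an indefinite MC^α integral of af + bg on I. -/

import Mathlib

open Filter Set Topology MeasureTheory

/-- `φ` is an `α`-control function for the pair `(F, f)` on the interval `I`:
`φ` is strictly increasing on `I` and for every `x ∈ I`,
`(F y - F x - f x (y - x)) / (φ (x + α (y - x)) - φ x) → 0` as `y → x` within `I \ {x}`. -/
def IsControlFn (α : ℝ) (I : Set ℝ) (F f φ : ℝ → ℝ) : Prop :=
  StrictMonoOn φ I ∧ ∀ x ∈ I,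
    Tendsto (fun y => (F y - F x - f x * (y - x)) / (φ (x + α * (y - x)) - φ x))
      (𝓝[I \ {x}] x) (𝓝 0)

/-- `F` is an indefinite `MC^α` integral of `f` on `I`. -/
def IsMCIntegral (α : ℝ) (I : Set ℝ) (F f : ℝ → ℝ) : Prop :=
  ∃ φ : ℝ → ℝ, IsControlFn α I F f φ

lemma key_ineq (A B t s : ℝ) (ht : 0 < |t|) (hs : 0 < |s|)
    (h1 : |t| ≤ |t + s|) (h2 : |s| ≤ |t + s|) :
    |(A + B) / (t + s)| ≤ |A / t| + |B / s| := by
  rw [abs_div, abs_div, abs_div]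
  have hts : 0 < |t + s| := lt_of_lt_of_le ht h1
  calc |A + B| / |t + s| ≤ (|A| + |B|) / |t + s| := by
        gcongr; exact abs_add_le A B
    _ ≤ |A| / |t| + |B| / |s| := by
        rw [add_div]
        gcongr

/-- Linearity of the `MC^α` integral. -/
theorem stmt_0 (α : ℝ) (hα : 0 < α) (I : Set ℝ) (hIopen : IsOpen I)
    (hIconn : I.OrdConnected) (F G f g : ℝ → ℝ) (a b : ℝ)
    (hF : IsMCIntegral α I F f) (hG : IsMCIntegral α I G g) :
    IsMCIntegral α I (fun x => a * F x + b * G x) (fun x => a * f x + b * g x) := by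
  obtain ⟨φ, hφmono, hφlim⟩ := hF
  obtain ⟨ψ, hψmono, hψlim⟩ := hG
  refine ⟨φ + ψ, hφmono.add hψmono, ?_⟩
  intro x hx
  have hφ := hφlim x hx
  have hψ := hψlim x hx
  have hmem : ∀ᶠ y in 𝓝[I \ {x}] x, x + α * (y - x) ∈ I := by
    have hcont : Tendsto (fun y : ℝ => x + α * (y - x)) (𝓝 x) (𝓝 x) := by
      have h : Tendsto (fun y : ℝ => x + α * (y - x)) (𝓝 x) (𝓝 (x + α * (x - x))) := by
        apply Tendsto.const_add
        exact (tendsto_id.sub_const x).const_mul α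
      simpa using h
    exact (hcont.mono_left nhdsWithin_le_nhds).eventually (hIopen.eventually_mem hx)
  have hself : ∀ᶠ y in 𝓝[I \ {x}] x, y ∈ I \ {x} := eventually_mem_nhdsWithin
  apply squeeze_zero_norm'
    (a := fun y => |a| * |(F y - F x - f x * (y - x)) / (φ (x + α * (y - x)) - φ x)|
      + |b| * |(G y - G x - g x * (y - x)) / (ψ (x + α * (y - x)) - ψ x)|)
  · filter_upwards [hmem, hself] with y hzI hy
    obtain ⟨hyI, hyx⟩ := hy
    set z := x + α * (y - x) with hz
    have hxne : x ≠ y := Ne.symm hyx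
    set t := φ z - φ x with htdef
    set s := ψ z - ψ x with hsdef
    have hsigns : (0 < t ∧ 0 < s) ∨ (t < 0 ∧ s < 0) := by
      rcases lt_or_gt_of_ne hxne with h | h
      · have hzgt : x < z := by simp only [hz]; nlinarith
        exact Or.inl ⟨sub_pos.2 (hφmono hx hzI hzgt), sub_pos.2 (hψmono hx hzI hzgt)⟩
      · have hzlt : z < x := by simp only [hz]; nlinarith
        exact Or.inr ⟨sub_neg.2 (hφmono hzI hx hzlt), sub_neg.2 (hψmono hzI hx hzlt)⟩
    have ht0 : 0 < |t| := by rcases hsigns with ⟨h1, _⟩ | ⟨h1, _⟩ <;> simp [abs_pos, h1.ne', h1.ne]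
    have hs0 : 0 < |s| := by rcases hsigns with ⟨_, h1⟩ | ⟨_, h1⟩ <;> simp [abs_pos, h1.ne', h1.ne]
    have h1 : |t| ≤ |t + s| := by
      rcases hsigns with ⟨ha1, ha2⟩ | ⟨ha1, ha2⟩
      · rw [abs_of_pos ha1, abs_of_pos (by linarith)]; linarith
      · rw [abs_of_neg ha1, abs_of_neg (by linarith)]; linarith
    have h2 : |s| ≤ |t + s| := by
      rcases hsigns with ⟨ha1, ha2⟩ | ⟨ha1, ha2⟩
      · rw [abs_of_pos ha2, abs_of_pos (by linarith)]; linarith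
      · rw [abs_of_neg ha2, abs_of_neg (by linarith)]; linarith
    have hnum : a * F y + b * G y - (a * F x + b * G x) - (a * f x + b * g x) * (y - x)
        = a * (F y - F x - f x * (y - x)) + b * (G y - G x - g x * (y - x)) := by ring
    have hkey := key_ineq (a * (F y - F x - f x * (y - x)))
      (b * (G y - G x - g x * (y - x))) t s ht0 hs0 h1 h2
    simp only [Real.norm_eq_abs, Pi.add_apply]
    calc |(a * F y + b * G y - (a * F x + b * G x) - (a * f x + b * g x) * (y - x))
          / (φ z + ψ z - (φ x + ψ x))|
        = |(a * (F y - F x - f x * (y - x)) + b * (G y - G x - g x * (y - x))) / (t + s)| := by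
          rw [hnum, htdef, hsdef]; ring_nf
      _ ≤ |a * (F y - F x - f x * (y - x)) / t| + |b * (G y - G x - g x * (y - x)) / s| := hkey
      _ = |a| * |(F y - F x - f x * (y - x)) / t| + |b| * |(G y - G x - g x * (y - x)) / s| := by
          rw [mul_div_assoc, mul_div_assoc, abs_mul, abs_mul]
  · have := (hφ.abs.const_mul |a|).add (hψ.abs.const_mul |b|)
    simpa using this
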